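/- Let ω ∈ (0,1] and f ∈ [0,1]. Define f'(p) = f if p < ω and f'(p) = 1 − f if p ≥ ω, and Ω(p, f) = (e − f'(p))^{ω − p}. Then p ↦ Ω(p, f) is strictly decreasing on [0,1]. -/
import Mathlib


/-- The weighting `Ω(p, f) = (e − f'(p))^{ω − p}` is strictly
decreasing on `[0,1]`. -/
theorem ccar_strict_anti
    (ω f : ℝ) (hω : ω ∈ Set.Ioc (0 : ℝ) 1) (hf : f ∈ Set.Icc (0 : ℝ) 1)
    (f' : ℝ → ℝ) (hf' : ∀ p, f' p = if p < ω then f else 1 - f)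
    (Ω : ℝ → ℝ) (hΩ : ∀ p, Ω p = (Real.exp 1 - f' p) ^ (ω - p)) :
    StrictAntiOn Ω (Set.Icc (0 : ℝ) 1) := by
  have he : (2 : ℝ) < Real.exp 1 := by
    have := Real.exp_one_gt_d9; linarith
  have hb1 : (1 : ℝ) < Real.exp 1 - f := by
    have := hf.2; linarith
  have hb2 : (1 : ℝ) < Real.exp 1 - (1 - f) := by
    have := hf.1; linarith
  intro p hp q hq hpq
  rw [hΩ p, hΩ q, hf' p, hf' q]
  rcases lt_or_ge q ω with hqω | hqω
  · have hpω : p < ω := lt_trans hpq hqω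
    rw [if_pos hpω, if_pos hqω]
    exact (Real.rpow_lt_rpow_left_iff hb1).2 (by linarith)
  · rw [if_neg (not_lt.2 hqω)]
    rcases lt_or_ge p ω with hpω | hpω
    · rw [if_pos hpω]
      have h1 : (Real.exp 1 - (1 - f)) ^ (ω - q) ≤ 1 :=
        Real.rpow_le_one_of_one_le_of_nonpos hb2.le (by linarith)
      have h2 : (1 : ℝ) < (Real.exp 1 - f) ^ (ω - p) :=
        Real.one_lt_rpow_iff_of_pos (by linarith) |>.2 (Or.inl ⟨hb1, by linarith⟩)
      linarith
    · rw [if_neg (not_lt.2 hpω)]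
      exact (Real.rpow_lt_rpow_left_iff hb2).2 (by linarith)
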